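/- The number of 123-avoiding permutations of {1,...,n} equals a_1(n+1, n+1), where a_1(m,i) = C(m+i-2, m-1) - C(m+i-2, m); consequently it equals C(2n, n)/(n+1). -/

import Mathlib

open List Finset

def Avoids123 {n : ℕ} (π : Equiv.Perm (Fin n)) : Prop :=
  ¬ ∃ i j k : Fin n, i < j ∧ j < k ∧ π i < π j ∧ π j < π k

open scoped Classical

/-- no increasing triple as a sublist -/
def Av (l : List ℕ) : Prop := ∀ a b c : ℕ, a < b → b < c → ¬ [a,b,c] <+ l

/-- no increasing pair with smaller value `≥ i` -/
def NoHi (i : ℕ) (l : List ℕ) : Prop := ∀ a b : ℕ, i ≤ a → a < b → ¬ [a,b] <+ l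

noncomputable def permsF (m : ℕ) : Finset (List ℕ) := (List.range m).permutations.toFinset

noncomputable def cnt (m i : ℕ) : ℕ :=
  ((permsF m).filter (fun l => Av l ∧ l.head? = some i)).card

lemma mem_permsF {m : ℕ} {l : List ℕ} : l ∈ permsF m ↔ l ~ List.range m := by
  simp [permsF, List.mem_permutations]

lemma perm_range_length {m : ℕ} {l : List ℕ} (h : l ~ List.range m) : l.length = m := by
  simpa using h.length_eq

lemma perm_range_nodup {m : ℕ} {l : List ℕ} (h : l ~ List.range m) : l.Nodup :=
  h.symm.nodup List.nodup_range

lemma perm_range_lt {m : ℕ} {l : List ℕ} (h : l ~ List.range m) {x : ℕ} (hx : x ∈ l) :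
    x < m := by
  have := (h.mem_iff).mp hx
  simpa using this

lemma perm_range_of {m : ℕ} {l : List ℕ} (hnd : l.Nodup) (hlen : l.length = m)
    (hmem : ∀ x ∈ l, x < m) : l ~ List.range m := by
  refine (List.subperm_of_subset hnd ?_).perm_of_length_le (by simp [hlen])
  intro x hx
  simpa using hmem x hx

lemma av_sublist {l l' : List ℕ} (h : l' <+ l) (hav : Av l) : Av l' :=
  fun a b c hab hbc hsub => hav a b c hab hbc (hsub.trans h)

lemma pair12 {a b c : ℕ} : [a,b] <+ [a,b,c] := by
  exact (List.cons_sublist_cons).mpr ((List.cons_sublist_cons).mpr (List.nil_sublist _))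

lemma pair13 {a b c : ℕ} : [a,c] <+ [a,b,c] := by
  refine (List.cons_sublist_cons).mpr ?_
  exact (List.sublist_cons_self b [c]).trans (List.Sublist.refl _)

lemma pair23 {a b c : ℕ} : [b,c] <+ [a,b,c] := List.sublist_cons_self a [b,c]

lemma pair_sublist_map {f : ℕ → ℕ} {l : List ℕ} {a b : ℕ} :
    [a,b] <+ l.map f ↔ ∃ a' b', [a',b'] <+ l ∧ a = f a' ∧ b = f b' := by
  constructor
  · intro h
    obtain ⟨l', hl', he⟩ := List.sublist_map_iff.mp h
    match l', he with
    | [a', b'], he =>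
      simp only [List.map_cons, List.map_nil, List.cons.injEq, and_true] at he
      exact ⟨a', b', hl', he.1, he.2⟩
  · rintro ⟨a', b', hsub, rfl, rfl⟩
    simpa using hsub.map f

lemma triple_sublist_map {f : ℕ → ℕ} {l : List ℕ} {a b c : ℕ} :
    [a,b,c] <+ l.map f ↔ ∃ a' b' c', [a',b',c'] <+ l ∧ a = f a' ∧ b = f b' ∧ c = f c' := by
  constructor
  · intro h
    obtain ⟨l', hl', he⟩ := List.sublist_map_iff.mp h
    match l', he with
    | [a', b', c'], he =>
      simp only [List.map_cons, List.map_nil, List.cons.injEq, and_true] at he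
      exact ⟨a', b', c', hl', he.1, he.2.1, he.2.2⟩
  · rintro ⟨a', b', c', hsub, rfl, rfl, rfl⟩
    simpa using hsub.map f

lemma mem_of_triple_sublist {a b c : ℕ} {l : List ℕ} (h : [a,b,c] <+ l) :
    a ∈ l ∧ b ∈ l ∧ c ∈ l := by
  have := h.subset
  exact ⟨this (by simp), this (by simp), this (by simp)⟩

lemma mem_of_pair_sublist {a b : ℕ} {l : List ℕ} (h : [a,b] <+ l) :
    a ∈ l ∧ b ∈ l := by
  have := h.subset
  exact ⟨this (by simp), this (by simp)⟩

lemma av_map_of {f : ℕ → ℕ} {l : List ℕ}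
    (hf : ∀ a ∈ l, ∀ b ∈ l, (a < b ↔ f a < f b)) : Av (l.map f) ↔ Av l := by
  constructor
  · intro h a b c hab hbc hsub
    obtain ⟨ha, hb, hc⟩ := mem_of_triple_sublist hsub
    exact h (f a) (f b) (f c) ((hf a ha b hb).mp hab) ((hf b hb c hc).mp hbc)
      (by simpa using hsub.map f)
  · intro h a b c hab hbc hsub
    obtain ⟨a', b', c', hsub', rfl, rfl, rfl⟩ := triple_sublist_map.mp hsub
    obtain ⟨ha, hb, hc⟩ := mem_of_triple_sublist hsub'
    exact h a' b' c' ((hf a' ha b' hb).mpr hab) ((hf b' hb c' hc).mpr hbc) hsub'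

lemma av_cons_iff {i : ℕ} {t : List ℕ} : Av (i :: t) ↔ Av t ∧ NoHi (i+1) t := by
  constructor
  · intro h
    refine ⟨av_sublist (List.sublist_cons_self i t) h, ?_⟩
    intro a b hia hab hsub
    exact h i a b hia hab ((List.cons_sublist_cons).mpr hsub)
  · rintro ⟨hav, hnohi⟩ a b c hab hbc hsub
    rcases List.sublist_cons_iff.mp hsub with h | ⟨r, hr, hrsub⟩
    · exact hav a b c hab hbc h
    · cases hr
      exact hnohi b c hab hbc hrsub

-- bridge
def listOf {m : ℕ} (π : Equiv.Perm (Fin m)) : List ℕ := List.ofFn (fun j => (π j : ℕ))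

lemma listOf_perm {m : ℕ} (π : Equiv.Perm (Fin m)) : listOf π ~ List.range m := by
  refine perm_range_of ?_ (by simp [listOf]) ?_
  · rw [listOf, List.nodup_ofFn]
    intro a b hab
    exact π.injective (Fin.ext hab)
  · intro x hx
    rw [listOf, List.mem_ofFn] at hx
    obtain ⟨j, rfl⟩ := hx
    exact (π j).isLt

lemma listOf_length {m : ℕ} (π : Equiv.Perm (Fin m)) : (listOf π).length = m := by
  simp [listOf]

lemma listOf_get {m : ℕ} (π : Equiv.Perm (Fin m)) (j : ℕ) (hj : j < (listOf π).length) :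
    (listOf π)[j] = (π ⟨j, by simpa [listOf] using hj⟩ : ℕ) := by
  simp [listOf, List.getElem_ofFn]

noncomputable def permOfList (m : ℕ) (l : List ℕ) (h : l ~ List.range m) : Equiv.Perm (Fin m) :=
  Equiv.ofBijective
    (fun j => (⟨l[(j : ℕ)]'(by rw [perm_range_length h]; exact j.isLt),
      perm_range_lt h (List.getElem_mem _)⟩ : Fin m))
    (by
      rw [← Finite.injective_iff_bijective]
      intro a b hab
      have hnd := perm_range_nodup h
      have := List.nodup_iff_injective_get.mp hnd
      have h2 : l.get ⟨a, by rw [perm_range_length h]; exact a.isLt⟩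
          = l.get ⟨b, by rw [perm_range_length h]; exact b.isLt⟩ := by
        simpa [List.get_eq_getElem] using congrArg Fin.val hab
      have h3 := this h2
      injection h3 with h4
      exact Fin.ext h4)

lemma listOf_permOfList {m : ℕ} (l : List ℕ) (h : l ~ List.range m) :
    listOf (permOfList m l h) = l := by
  apply List.ext_getElem (by simp [listOf, perm_range_length h])
  intro j h1 h2
  rw [listOf_get]
  simp [permOfList, Equiv.ofBijective]

lemma permOfList_listOf {m : ℕ} (π : Equiv.Perm (Fin m)) (h : listOf π ~ List.range m) :
    permOfList m (listOf π) h = π := by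
  ext j
  simp only [permOfList, Equiv.ofBijective, Equiv.coe_fn_mk]
  rw [listOf_get]

lemma avoids_iff_av {m : ℕ} (π : Equiv.Perm (Fin m)) : Avoids123 π ↔ Av (listOf π) := by
  constructor
  · intro h a b c hab hbc hsub
    obtain ⟨is, his, hpw⟩ := List.sublist_eq_map_getElem hsub
    match is, his, hpw with
    | [i, j, k], his, hpw =>
      simp only [List.map_cons, List.map_nil, List.cons.injEq, and_true] at his
      obtain ⟨ha, hb, hc⟩ := his
      simp only [List.pairwise_cons] at hpw
      have hij : (i : ℕ) < j := hpw.1 j (by simp)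
      have hjk : (j : ℕ) < k := hpw.2.1 k (by simp)
      apply h
      refine ⟨⟨i, by simpa [listOf] using i.isLt⟩, ⟨j, by simpa [listOf] using j.isLt⟩,
        ⟨k, by simpa [listOf] using k.isLt⟩, hij, hjk, ?_, ?_⟩
      · rw [Fin.lt_iff_val_lt_val]
        have hga : (listOf π)[(i:ℕ)] = a := by simpa [List.get_eq_getElem] using ha.symm
        have hgb : (listOf π)[(j:ℕ)] = b := by simpa [List.get_eq_getElem] using hb.symm
        rw [listOf_get] at hga hgb
        rw [show (⟨(i:ℕ), _⟩ : Fin m) = ⟨i, by simpa [listOf] using i.isLt⟩ from rfl] at hga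
        simp only [hga, hgb] at *
        omega
      · rw [Fin.lt_iff_val_lt_val]
        have hgb : (listOf π)[(j:ℕ)] = b := by simpa [List.get_eq_getElem] using hb.symm
        have hgc : (listOf π)[(k:ℕ)] = c := by simpa [List.get_eq_getElem] using hc.symm
        rw [listOf_get] at hgb hgc
        simp only [hgb, hgc] at *
        omega
  · intro h ⟨i, j, k, hij, hjk, h1, h2⟩
    set l := listOf π with hl
    have hlen : l.length = m := listOf_length π
    have hsub : List.map l.get [⟨i, by omega⟩, ⟨j, by omega⟩, ⟨k, by omega⟩] <+ l := by
      apply List.map_getElem_sublist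
      simp only [List.pairwise_cons]
      refine ⟨fun y hy => ?_, fun y hy => ?_, by simp, List.Pairwise.nil⟩
      · simp only [List.mem_cons, List.mem_singleton, List.not_mem_nil, or_false] at hy
        rcases hy with rfl | rfl
        · exact hij
        · exact Nat.lt_trans hij hjk
      · simp only [List.mem_cons, List.mem_singleton, List.not_mem_nil, or_false] at hy
        rcases hy with rfl
        exact hjk
    simp only [List.map_cons, List.map_nil, List.get_eq_getElem] at hsub
    rw [listOf_get, listOf_get, listOf_get] at hsub
    apply h _ _ _ _ _ hsub
    · exact h1
    · exact h2

lemma card_bridge (m : ℕ) (Q : Equiv.Perm (Fin m) → Prop) (P : List ℕ → Prop)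
    [DecidablePred P] (hQP : ∀ π, Q π ↔ P (listOf π)) :
    Nat.card {π : Equiv.Perm (Fin m) // Q π} = ((permsF m).filter P).card := by
  rw [Nat.card_eq_fintype_card, Fintype.card_subtype]
  refine Finset.card_bij' (fun π _ => listOf π)
    (fun l hl => permOfList m l (mem_permsF.mp (Finset.mem_filter.mp hl).1)) ?_ ?_ ?_ ?_
  · intro π hπ
    rw [Finset.mem_filter] at hπ ⊢
    exact ⟨mem_permsF.mpr (listOf_perm π), (hQP π).mp hπ.2⟩
  · intro l hl
    rw [Finset.mem_filter] at hl
    refine Finset.mem_filter.mpr ⟨Finset.mem_univ _, ?_⟩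
    rw [hQP, listOf_permOfList]
    exact hl.2
  · intro π hπ
    exact permOfList_listOf π _
  · intro l hl
    exact listOf_permOfList l _

lemma listOf_head {n : ℕ} (π : Equiv.Perm (Fin (n+1))) :
    (listOf π).head? = some ((π 0 : Fin (n+1)) : ℕ) := by
  rw [listOf, List.ofFn_succ]
  rfl

lemma a1_bridge (n : ℕ) :
    Nat.card {π : Equiv.Perm (Fin (n+1)) //
      Avoids123 π ∧ ∀ j : Fin (n+1), j.val = 0 → ((π j : Fin (n+1)) : ℕ) + 1 = (n+1)} =
    cnt (n+1) n := by
  rw [cnt]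
  apply card_bridge
  intro π
  rw [avoids_iff_av]
  constructor
  · rintro ⟨hav, hh⟩
    refine ⟨hav, ?_⟩
    rw [listOf_head]
    have := hh 0 rfl
    exact congrArg some (by omega)
  · rintro ⟨hav, hh⟩
    refine ⟨hav, fun j hj => ?_⟩
    have hj0 : j = 0 := Fin.ext hj
    subst hj0
    rw [listOf_head] at hh
    have h0 : ((π 0 : Fin (n+1)) : ℕ) = n := by
      injection hh
    omega

lemma avoiders_bridge (n : ℕ) :
    Nat.card {π : Equiv.Perm (Fin n) // Avoids123 π} = ((permsF n).filter Av).card := by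
  apply card_bridge
  intro π
  exact avoids_iff_av π
section G3

lemma prepend_max_card (n : ℕ) :
    ((permsF n).filter Av).card = cnt (n+1) n := by
  rw [cnt]
  refine Finset.card_bij' (fun l _ => n :: l) (fun l _ => l.tail) ?_ ?_ ?_ ?_
  · intro l hl
    rw [Finset.mem_filter] at hl ⊢
    obtain ⟨hmem, hav⟩ := hl
    have hperm := mem_permsF.mp hmem
    refine ⟨mem_permsF.mpr ?_, ?_, rfl⟩
    · refine perm_range_of ?_ ?_ ?_
      · refine List.nodup_cons.mpr ⟨fun h => ?_, perm_range_nodup hperm⟩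
        exact absurd (perm_range_lt hperm h) (lt_irrefl n)
      · simp [perm_range_length hperm]
      · intro x hx
        rcases List.mem_cons.mp hx with rfl | hx
        · omega
        · have := perm_range_lt hperm hx; omega
    · intro a b c hab hbc hsub
      rcases List.sublist_cons_iff.mp hsub with h | ⟨r, hr, hrsub⟩
      · exact hav a b c hab hbc h
      · cases hr
        have hb : b ∈ l := (mem_of_pair_sublist hrsub).1
        have := perm_range_lt hperm hb
        omega
  · intro l hl
    rw [Finset.mem_filter] at hl
    obtain ⟨hmem, hav, hh⟩ := hl
    have hperm := mem_permsF.mp hmem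
    cases l with
    | nil => simp at hh
    | cons x t =>
      have hx : n = x := by
        injection hh with h2; exact h2.symm
      subst hx
      rw [Finset.mem_filter]
      refine ⟨mem_permsF.mpr ?_, ?_⟩
      · have h2 : n :: t ~ n :: List.range n := by
          refine hperm.trans ?_
          rw [List.range_succ]
          exact List.perm_append_singleton n (List.range n)
        simpa using h2.cons_inv
      · exact av_sublist (List.sublist_cons_self n t) hav
  · intro l hl
    rfl
  · intro l hl
    rw [Finset.mem_filter] at hl
    obtain ⟨hmem, hav, hh⟩ := hl
    cases l with
    | nil => simp at hh
    | cons x t =>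
      have hx : n = x := by
        injection hh with h2; exact h2.symm
      subst hx
      rfl

end G3
section Maps

/-- delete-renormalize map -/
def rr (i x : ℕ) : ℕ := if x < i then x else x - 1
/-- inverse of `rr` -/
def ss (i x : ℕ) : ℕ := if x < i then x else x + 1

lemma ss_rr {i x : ℕ} (hx : x ≠ i) : ss i (rr i x) = x := by
  simp only [rr, ss]; split_ifs <;> omega

lemma rr_ss {i x : ℕ} : rr i (ss i x) = x := by
  simp only [rr, ss]; split_ifs <;> omega

lemma rr_lt_iff {i a b : ℕ} (ha : a ≠ i) (hb : b ≠ i) : a < b ↔ rr i a < rr i b := by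
  simp only [rr]; split_ifs <;> omega

lemma ss_lt_iff {i a b : ℕ} : a < b ↔ ss i a < ss i b := by
  simp only [ss]; split_ifs <;> omega

lemma nohi_rr {i : ℕ} {t : List ℕ} (hi : i ∉ t) :
    NoHi (i+1) t ↔ NoHi i (t.map (rr i)) := by
  constructor
  · intro h a b hia hab hsub
    obtain ⟨a', b', hsub', rfl, rfl⟩ := pair_sublist_map.mp hsub
    obtain ⟨ha', hb'⟩ := mem_of_pair_sublist hsub'
    have hai : a' ≠ i := fun he => hi (he ▸ ha')
    have hbi : b' ≠ i := fun he => hi (he ▸ hb')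
    refine h a' b' ?_ ((rr_lt_iff hai hbi).mpr hab) hsub'
    simp only [rr] at hia; split_ifs at hia <;> omega
  · intro h a b hia hab hsub
    obtain ⟨ha, hb⟩ := mem_of_pair_sublist hsub
    have hai : a ≠ i := fun he => hi (he ▸ ha)
    have hbi : b ≠ i := fun he => hi (he ▸ hb)
    refine h (rr i a) (rr i b) ?_ ((rr_lt_iff hai hbi).mp hab) (by simpa using hsub.map (rr i))
    simp only [rr]; split_ifs <;> omega

end Maps

section CardHeadEq

lemma card_head_eq (m i : ℕ) (him : i ≤ m) :
    ((permsF (m+1)).filter (fun l => Av l ∧ l.head? = some i)).card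
      = ((permsF m).filter (fun σ => Av σ ∧ NoHi i σ)).card := by
  refine Finset.card_bij' (fun l _ => l.tail.map (rr i)) (fun σ _ => i :: σ.map (ss i))
    ?_ ?_ ?_ ?_
  · intro l hl
    rw [Finset.mem_filter] at hl ⊢
    obtain ⟨hmem, hav, hh⟩ := hl
    have hperm := mem_permsF.mp hmem
    cases l with
    | nil => simp at hh
    | cons x t =>
      have hx : i = x := by injection hh with h2; exact h2.symm
      subst hx
      have hnd : (i :: t).Nodup := perm_range_nodup hperm
      have hit : i ∉ t := (List.nodup_cons.mp hnd).1
      have htnd : t.Nodup := (List.nodup_cons.mp hnd).2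
      have hmemt : ∀ x ∈ t, x < m + 1 :=
        fun x hx => perm_range_lt hperm (List.mem_cons_of_mem _ hx)
      have hlen : t.length = m := by
        have := perm_range_length hperm; simpa using this
      obtain ⟨havt, hnohit⟩ := av_cons_iff.mp hav
      refine ⟨mem_permsF.mpr (perm_range_of ?_ (by simp [hlen]) ?_), ?_, ?_⟩
      · refine List.Nodup.map_on ?_ htnd
        intro x hx y hy hxy
        have hxi : x ≠ i := fun he => hit (he ▸ hx)
        have hyi : y ≠ i := fun he => hit (he ▸ hy)
        simp only [rr] at hxy; split_ifs at hxy <;> omega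
      · intro x hx
        simp only [List.mem_map] at hx
        obtain ⟨y, hy, rfl⟩ := hx
        have := hmemt y hy
        have hyi : y ≠ i := fun he => hit (he ▸ hy)
        simp only [rr]; split_ifs <;> omega
      · rw [av_map_of]
        · exact havt
        · intro a ha b hb
          exact rr_lt_iff (fun he => hit (he ▸ ha)) (fun he => hit (he ▸ hb))
      · exact (nohi_rr hit).mp hnohit
  · intro σ hσ
    rw [Finset.mem_filter] at hσ ⊢
    obtain ⟨hmem, hav, hnohi⟩ := hσ
    have hperm := mem_permsF.mp hmem
    have hnd := perm_range_nodup hperm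
    have hmemσ : ∀ x ∈ σ, x < m := fun x hx => perm_range_lt hperm hx
    refine ⟨mem_permsF.mpr (perm_range_of ?_ ?_ ?_), ?_, rfl⟩
    · refine List.nodup_cons.mpr ⟨?_, ?_⟩
      · intro h
        simp only [List.mem_map] at h
        obtain ⟨y, hy, he⟩ := h
        simp only [ss] at he; split_ifs at he <;> omega
      · refine List.Nodup.map_on ?_ hnd
        intro x hx y hy hxy
        simp only [ss] at hxy; split_ifs at hxy <;> omega
    · simp [perm_range_length hperm]
    · intro x hx
      rcases List.mem_cons.mp hx with rfl | hx
      · omega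
      · simp only [List.mem_map] at hx
        obtain ⟨y, hy, rfl⟩ := hx
        have := hmemσ y hy
        simp only [ss]; split_ifs <;> omega
    · rw [av_cons_iff]
      constructor
      · rw [av_map_of]
        · exact hav
        · intro a _ b _; exact ss_lt_iff
      · intro a b hia hab hsub
        obtain ⟨a', b', hsub', rfl, rfl⟩ := pair_sublist_map.mp hsub
        refine hnohi a' b' ?_ (ss_lt_iff.mpr hab) hsub'
        simp only [ss] at hia ⊢; split_ifs at hia <;> omega
  · intro l hl
    rw [Finset.mem_filter] at hl
    obtain ⟨hmem, hav, hh⟩ := hl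
    have hperm := mem_permsF.mp hmem
    cases l with
    | nil => simp at hh
    | cons x t =>
      have hx : i = x := by injection hh with h2; exact h2.symm
      subst hx
      have hnd : (i :: t).Nodup := perm_range_nodup hperm
      have hit : i ∉ t := (List.nodup_cons.mp hnd).1
      simp only [List.tail_cons, List.map_map, List.cons.injEq, true_and]
      have h1 : List.map (ss i ∘ rr i) t = List.map (fun x => x) t :=
        List.map_congr_left (fun x hx => ss_rr (fun he : x = i => hit (he ▸ hx)))
      simpa using h1
  · intro σ hσ
    simp only [List.tail_cons, List.map_map]
    have h1 : List.map (rr i ∘ ss i) σ = List.map (fun x => x) σ :=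
      List.map_congr_left (fun x _ => rr_ss)
    simpa using h1

end CardHeadEq
section Rotation

/-- rotation of the values `{i,…,M}`: `M ↦ i`, `x ↦ x+1` for `i ≤ x < M` -/
def gg (i M x : ℕ) : ℕ := if x = M then i else if x < i then x else x + 1
/-- inverse rotation -/
def gg' (i M x : ℕ) : ℕ := if x = i then M else if x < i then x else x - 1

lemma gg'_gg {i M x : ℕ} (hx : x < M + 1) (hiM : i ≤ M) : gg' i M (gg i M x) = x := by
  simp only [gg, gg']; split_ifs <;> omega

lemma gg_gg' {i M x : ℕ} (hx : x < M + 1) (hiM : i ≤ M) : gg i M (gg' i M x) = x := by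
  simp only [gg, gg']; split_ifs <;> omega

lemma gg_lt {i M x : ℕ} (hx : x < M + 1) (hiM : i ≤ M) : gg i M x < M + 1 := by
  simp only [gg]; split_ifs <;> omega

lemma gg'_lt {i M x : ℕ} (hx : x < M + 1) (hiM : i ≤ M) : gg' i M x < M + 1 := by
  simp only [gg']; split_ifs <;> omega

/-- forward rotation preserves 123-avoidance -/
lemma av_rot {M i : ℕ} {t : List ℕ} (hmem : ∀ x ∈ t, x < M) (hav : Av (M :: t))
    (hnohi : NoHi i (M :: t)) (hiM : i ≤ M) : Av ((M :: t).map (gg i M)) := by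
  intro a b c hab hbc hsub
  obtain ⟨a', b', c', hsub', rfl, rfl, rfl⟩ := triple_sublist_map.mp hsub
  have havt : Av t := av_sublist (List.sublist_cons_self M t) hav
  rcases List.sublist_cons_iff.mp hsub' with h | ⟨r, hr, hrsub⟩
  · -- [a',b',c'] <+ t : all values < M
    obtain ⟨ha, hb, hc⟩ := mem_of_triple_sublist h
    have haM := hmem a' ha
    have hbM := hmem b' hb
    have hcM := hmem c' hc
    -- pairs of values ≥ i in t are decreasing
    have hpair : ∀ u v : ℕ, i ≤ u → u < v → ¬ [u,v] <+ t :=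
      fun u v hu huv hs => hnohi u v hu huv (hs.trans (List.sublist_cons_self M t))
    by_cases hai : a' < i <;> by_cases hbi : b' < i <;> by_cases hci : c' < i
    · -- all small: gg = id on them
      refine havt a' b' c' ?_ ?_ h <;>
        (simp only [gg] at hab hbc; split_ifs at hab hbc <;> omega)
    · -- a',b' < i, c' ≥ i : increasing triple in t
      have h1 : a' < b' := by simp only [gg] at hab; split_ifs at hab <;> omega
      have h2 : b' < c' := by omega
      exact havt a' b' c' h1 h2 h
    · -- a' < i, b' ≥ i, c' < i : gg b' ≥ i > c' = gg c', contradiction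
      simp only [gg] at hbc; split_ifs at hbc <;> omega
    · -- a' < i, b' ≥ i, c' ≥ i : pair (b',c') both ≥ i
      have h2 : b' < c' := by simp only [gg] at hbc; split_ifs at hbc <;> omega
      exact hpair b' c' (by omega) h2 (pair23.trans h)
    · -- a' ≥ i, b' < i
      simp only [gg] at hab; split_ifs at hab <;> omega
    · -- a' ≥ i, b' < i
      simp only [gg] at hab; split_ifs at hab <;> omega
    · -- a' ≥ i, b' ≥ i, c' < i
      have h1 : a' < b' := by simp only [gg] at hab; split_ifs at hab <;> omega
      exact hpair a' b' (by omega) h1 (pair12.trans h)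
    · -- a',b',c' ≥ i
      have h1 : a' < b' := by simp only [gg] at hab; split_ifs at hab <;> omega
      exact hpair a' b' (by omega) h1 (pair12.trans h)
  · -- a' = M, [b',c'] <+ t
    cases hr
    obtain ⟨hb, hc⟩ := mem_of_pair_sublist hrsub
    have hbM := hmem b' hb
    have hcM := hmem c' hc
    have hpair : ∀ u v : ℕ, i ≤ u → u < v → ¬ [u,v] <+ t :=
      fun u v hu huv hs => hnohi u v hu huv (hs.trans (List.sublist_cons_self M t))
    by_cases hbi : b' < i
    · -- gg b' = b' < i = gg M
      simp only [gg] at hab; split_ifs at hab <;> omega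
    · by_cases hci : c' < i
      · -- gg c' = c' < i ≤ ... < gg b'
        simp only [gg] at hbc; split_ifs at hbc <;> omega
      · have h1 : b' < c' := by simp only [gg] at hbc; split_ifs at hbc <;> omega
        exact hpair b' c' (by omega) h1 hrsub

/-- backward rotation preserves 123-avoidance -/
lemma av_rot' {M i : ℕ} {w : List ℕ} (hmem : ∀ x ∈ w, x < M + 1) (hiw : i ∉ w)
    (hav : Av (i :: w)) (hiM : i ≤ M) : Av ((i :: w).map (gg' i M)) := by
  have h0 : gg' i M i = M := by simp [gg']
  intro a b c hab hbc hsub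
  simp only [List.map_cons, h0] at hsub
  obtain ⟨havw, hnohi⟩ := av_cons_iff.mp hav
  rcases List.sublist_cons_iff.mp hsub with h | ⟨r, hr, hrsub⟩
  · -- [a,b,c] <+ map gg' w
    obtain ⟨a', b', c', hsub', rfl, rfl, rfl⟩ := triple_sublist_map.mp h
    obtain ⟨ha, hb, hc⟩ := mem_of_triple_sublist hsub'
    have haM := hmem a' ha
    have hbM := hmem b' hb
    have hcM := hmem c' hc
    have hai : a' ≠ i := fun he => hiw (he ▸ ha)
    have hbi : b' ≠ i := fun he => hiw (he ▸ hb)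
    have hci : c' ≠ i := fun he => hiw (he ▸ hc)
    by_cases ha2 : a' < i <;> by_cases hb2 : b' < i <;> by_cases hc2 : c' < i
    · refine havw a' b' c' ?_ ?_ hsub' <;>
        (simp only [gg'] at hab hbc; split_ifs at hab hbc <;> omega)
    · -- a',b' < i < c'
      have h1 : a' < b' := by simp only [gg'] at hab; split_ifs at hab <;> omega
      exact havw a' b' c' h1 (by omega) hsub'
    · simp only [gg'] at hbc; split_ifs at hbc <;> omega
    · -- b',c' > i
      have h2 : b' < c' := by simp only [gg'] at hbc; split_ifs at hbc <;> omega
      exact hnohi b' c' (by omega) h2 (pair23.trans hsub')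
    · simp only [gg'] at hab; split_ifs at hab <;> omega
    · simp only [gg'] at hab; split_ifs at hab <;> omega
    · have h1 : a' < b' := by simp only [gg'] at hab; split_ifs at hab <;> omega
      exact hnohi a' b' (by omega) h1 (pair12.trans hsub')
    · have h1 : a' < b' := by simp only [gg'] at hab; split_ifs at hab <;> omega
      exact hnohi a' b' (by omega) h1 (pair12.trans hsub')
  · -- a = M, [b,c] <+ map gg' w : impossible since values ≤ M
    cases hr
    have hb : b ∈ w.map (gg' i M) := (mem_of_pair_sublist hrsub).1
    simp only [List.mem_map] at hb
    obtain ⟨y, hy, rfl⟩ := hb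
    have := hmem y hy
    have hyi : y ≠ i := fun he => hiw (he ▸ hy)
    simp only [gg'] at hab; split_ifs at hab <;> omega

/-- backward rotation yields the `NoHi i` property -/
lemma nohi_rot' {M i : ℕ} {w : List ℕ} (hmem : ∀ x ∈ w, x < M + 1) (hiw : i ∉ w)
    (hav : Av (i :: w)) (hiM : i ≤ M) : NoHi i ((i :: w).map (gg' i M)) := by
  have h0 : gg' i M i = M := by simp [gg']
  intro a b hia hab hsub
  simp only [List.map_cons, h0] at hsub
  obtain ⟨havw, hnohi⟩ := av_cons_iff.mp hav
  rcases List.sublist_cons_iff.mp hsub with h | ⟨r, hr, hrsub⟩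
  · obtain ⟨a', b', hsub', rfl, rfl⟩ := pair_sublist_map.mp h
    obtain ⟨ha, hb⟩ := mem_of_pair_sublist hsub'
    have haM := hmem a' ha
    have hbM := hmem b' hb
    have hai : a' ≠ i := fun he => hiw (he ▸ ha)
    have hbi : b' ≠ i := fun he => hiw (he ▸ hb)
    have h1 : i < a' := by simp only [gg'] at hia; split_ifs at hia <;> omega
    have h2 : a' < b' := by simp only [gg'] at hab hia; split_ifs at hab hia <;> omega
    exact hnohi a' b' (by omega) h2 hsub'
  · cases hr
    have hb : b ∈ w.map (gg' i M) := List.singleton_sublist.mp hrsub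
    simp only [List.mem_map] at hb
    obtain ⟨y, hy, rfl⟩ := hb
    have := hmem y hy
    have hyi : y ≠ i := fun he => hiw (he ▸ hy)
    simp only [gg'] at hab; split_ifs at hab <;> omega

end Rotation
section CardB

lemma head_eq_max {M i : ℕ} {σ : List ℕ} (hperm : σ ~ List.range (M+1))
    (hnohi : NoHi i σ) (hhead : ¬ σ.headI < i) : σ.headI = M ∧ i ≤ M := by
  cases σ with
  | nil =>
    exfalso
    have := perm_range_length hperm
    simp at this
  | cons x t =>
    simp only [List.headI_cons] at hhead ⊢
    have hxM : x < M + 1 := perm_range_lt hperm List.mem_cons_self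
    by_cases hxe : x = M
    · exact ⟨hxe, by omega⟩
    · exfalso
      have hM : M ∈ x :: t := hperm.symm.subset (by simp)
      have hMt : M ∈ t := by
        rcases List.mem_cons.mp hM with h | h
        · omega
        · exact h
      have hsub : [x, M] <+ x :: t :=
        (List.cons_sublist_cons).mpr (List.singleton_sublist.mpr hMt)
      exact hnohi x M (by omega) (by omega) hsub

lemma card_rot (M i : ℕ) :
    (((permsF (M+1)).filter (fun σ => Av σ ∧ NoHi i σ)).filter
        (fun σ => ¬ σ.headI < i)).card
      = cnt (M+1) i := by
  rw [cnt]
  refine Finset.card_bij' (fun σ _ => σ.map (gg i M)) (fun τ _ => τ.map (gg' i M)) ?_ ?_ ?_ ?_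
  · intro σ hσ
    simp only [Finset.mem_filter] at hσ ⊢
    obtain ⟨⟨hmem, hav, hnohi⟩, hhead⟩ := hσ
    have hperm := mem_permsF.mp hmem
    obtain ⟨hmax, hiM⟩ := head_eq_max hperm hnohi hhead
    have hmemσ : ∀ x ∈ σ, x < M + 1 := fun x hx => perm_range_lt hperm hx
    refine ⟨mem_permsF.mpr (perm_range_of ?_ ?_ ?_), ?_, ?_⟩
    · refine List.Nodup.map_on ?_ (perm_range_nodup hperm)
      intro x hx y hy hxy
      have := hmemσ x hx; have := hmemσ y hy
      simp only [gg] at hxy; split_ifs at hxy <;> omega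
    · simp [perm_range_length hperm]
    · intro x hx
      simp only [List.mem_map] at hx
      obtain ⟨y, hy, rfl⟩ := hx
      exact gg_lt (hmemσ y hy) hiM
    · -- Av
      cases σ with
      | nil => intro a b c _ _ hsub; simp at hsub
      | cons x t =>
        simp only [List.headI_cons] at hmax
        have hmax' : M = x := hmax.symm
        subst hmax'
        have hnd := perm_range_nodup hperm
        have hMt : M ∉ t := (List.nodup_cons.mp hnd).1
        refine av_rot ?_ hav hnohi hiM
        intro x hx
        have := hmemσ x (List.mem_cons_of_mem _ hx)
        have : x ≠ M := fun he => hMt (he ▸ hx)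
        omega
    · -- head
      cases σ with
      | nil =>
        exfalso
        have := perm_range_length hperm
        simp at this
      | cons x t =>
        simp only [List.headI_cons] at hmax
        have hmax' : M = x := hmax.symm
        subst hmax'
        simp [gg]
  · intro τ hτ
    simp only [Finset.mem_filter] at hτ ⊢
    obtain ⟨hmem, hav, hh⟩ := hτ
    have hperm := mem_permsF.mp hmem
    have hmemτ : ∀ x ∈ τ, x < M + 1 := fun x hx => perm_range_lt hperm hx
    cases τ with
    | nil => simp at hh
    | cons x w =>
      have hx : i = x := by injection hh with h2; exact h2.symm
      subst hx
      have hiM : i ≤ M := by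
        have := hmemτ i (by simp); omega
      have hnd := perm_range_nodup hperm
      have hiw : i ∉ w := (List.nodup_cons.mp hnd).1
      have hmemw : ∀ x ∈ w, x < M + 1 := fun x hx => hmemτ x (List.mem_cons_of_mem _ hx)
      refine ⟨⟨mem_permsF.mpr (perm_range_of ?_ ?_ ?_), ?_, ?_⟩, ?_⟩
      · refine List.Nodup.map_on ?_ hnd
        intro x hx y hy hxy
        have := hmemτ x hx; have := hmemτ y hy
        simp only [gg'] at hxy; split_ifs at hxy <;> omega
      · have := perm_range_length hperm
        simp only [List.length_map]
        omega
      · intro x hx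
        simp only [List.mem_map] at hx
        obtain ⟨y, hy, rfl⟩ := hx
        exact gg'_lt (hmemτ y hy) hiM
      · exact av_rot' hmemw hiw hav hiM
      · exact nohi_rot' hmemw hiw hav hiM
      · simp [gg', hiM]
  · intro σ hσ
    simp only [Finset.mem_filter] at hσ
    obtain ⟨⟨hmem, hav, hnohi⟩, hhead⟩ := hσ
    have hperm := mem_permsF.mp hmem
    obtain ⟨hmax, hiM⟩ := head_eq_max hperm hnohi hhead
    have hmemσ : ∀ x ∈ σ, x < M + 1 := fun x hx => perm_range_lt hperm hx
    show List.map (gg' i M) (List.map (gg i M) σ) = σ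
    rw [List.map_map]
    have h1 : List.map (gg' i M ∘ gg i M) σ = List.map (fun x => x) σ :=
      List.map_congr_left (fun x hx => gg'_gg (hmemσ x hx) hiM)
    simpa using h1
  · intro τ hτ
    simp only [Finset.mem_filter] at hτ
    obtain ⟨hmem, hav, hh⟩ := hτ
    have hperm := mem_permsF.mp hmem
    have hmemτ : ∀ x ∈ τ, x < M + 1 := fun x hx => perm_range_lt hperm hx
    have hiM : i ≤ M := by
      cases τ with
      | nil => simp at hh
      | cons x w =>
        have hx : i = x := by injection hh with h2; exact h2.symm
        subst hx
        have := hmemτ i (by simp); omega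
    show List.map (gg i M) (List.map (gg' i M) τ) = τ
    rw [List.map_map]
    have h1 : List.map (gg i M ∘ gg' i M) τ = List.map (fun x => x) τ :=
      List.map_congr_left (fun x hx => gg_gg' (hmemτ x hx) hiM)
    simpa using h1

lemma fiber_eq (M i h : ℕ) (hhi : h < i) :
    (((permsF (M+1)).filter (fun σ => Av σ ∧ NoHi i σ)).filter
        (fun σ => σ.headI < i)).filter (fun σ => σ.headI = h)
      = (permsF (M+1)).filter (fun l => Av l ∧ l.head? = some h) := by
  ext σ
  simp only [Finset.mem_filter]
  constructor
  · rintro ⟨⟨⟨hmem, hav, hnohi⟩, _⟩, hhead⟩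
    refine ⟨hmem, hav, ?_⟩
    have hperm := mem_permsF.mp hmem
    cases σ with
    | nil => exfalso; have := perm_range_length hperm; simp at this
    | cons x t =>
      simp only [List.headI_cons] at hhead
      simp [hhead]
  · rintro ⟨hmem, hav, hh⟩
    cases σ with
    | nil => simp at hh
    | cons x t =>
      have hx : h = x := by injection hh with h2; exact h2.symm
      subst hx
      refine ⟨⟨⟨hmem, hav, ?_⟩, by simpa using hhi⟩, by simp⟩
      intro a b hia hab hsub
      rcases List.sublist_cons_iff.mp hsub with h' | ⟨r, hr, hrsub⟩
      · exact hav h a b (by omega) hab ((List.cons_sublist_cons).mpr h')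
      · cases hr; omega

lemma card_B (M i : ℕ) :
    ((permsF (M+1)).filter (fun σ => Av σ ∧ NoHi i σ)).card
      = ∑ h ∈ Finset.range (i+1), cnt (M+1) h := by
  rw [← Finset.card_filter_add_card_filter_not (fun σ => σ.headI < i)
    (s := (permsF (M+1)).filter (fun σ => Av σ ∧ NoHi i σ))]
  rw [Finset.sum_range_succ, card_rot M i]
  congr 1
  rw [Finset.card_eq_sum_card_fiberwise (f := fun σ => σ.headI) (t := Finset.range i) ?_]
  · refine Finset.sum_congr rfl ?_
    intro h hh
    rw [fiber_eq M i h (Finset.mem_range.mp hh), cnt]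
  · intro σ hσ
    simp only [Finset.mem_coe, Finset.mem_filter] at hσ
    exact Finset.mem_range.mpr hσ.2

lemma cnt_rec (M i : ℕ) (hi : i ≤ M + 1) :
    cnt (M+2) i = ∑ h ∈ Finset.range (i+1), cnt (M+1) h := by
  rw [cnt, card_head_eq (M+1) i hi, card_B]

end CardB
section Arithmetic

lemma cnt_zero_of_ge (m i : ℕ) (him : m ≤ i) : cnt m i = 0 := by
  rw [cnt, Finset.card_eq_zero]
  rw [Finset.eq_empty_iff_forall_notMem]
  intro l hl
  rw [Finset.mem_filter] at hl
  obtain ⟨hmem, _, hh⟩ := hl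
  have hperm := mem_permsF.mp hmem
  cases l with
  | nil => simp at hh
  | cons x t =>
    have hx : i = x := by injection hh with h2; exact h2.symm
    subst hx
    have := perm_range_lt hperm List.mem_cons_self
    omega

lemma cnt_one : cnt 1 0 = 1 := by
  rw [cnt]
  have : (permsF 1).filter (fun l => Av l ∧ l.head? = some 0) = {[0]} := by
    ext l
    rw [Finset.mem_filter, Finset.mem_singleton]
    constructor
    · rintro ⟨hmem, _, _⟩
      have hperm := mem_permsF.mp hmem
      simpa [List.range_succ] using List.perm_singleton.mp (by simpa [List.range_succ] using hperm)
    · rintro rfl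
      refine ⟨mem_permsF.mpr (by simp [List.range_succ]), ?_, rfl⟩
      intro a b c _ _ hsub
      have := hsub.length_le
      simp at this
  rw [this, Finset.card_singleton]

lemma hockey (M : ℕ) : ∀ i : ℕ,
    ∑ h ∈ Finset.range (i+1), (((M+h).choose M : ℤ) - ((M+h).choose (M+1) : ℤ))
      = ((M+1+i).choose (M+1) : ℤ) - ((M+1+i).choose (M+2) : ℤ) := by
  intro i
  induction i with
  | zero =>
    simp [Nat.choose_eq_zero_of_lt (by omega : M < M + 1),
      Nat.choose_eq_zero_of_lt (by omega : M + 1 < M + 2)]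
  | succ i ih =>
    rw [Finset.sum_range_succ, ih]
    have p1 : (M+1+(i+1)).choose (M+1) = (M+1+i).choose M + (M+1+i).choose (M+1) := by
      have : M+1+(i+1) = (M+1+i) + 1 := by omega
      rw [this]
      exact Nat.choose_succ_succ (M+1+i) M
    have p2 : (M+1+(i+1)).choose (M+2) = (M+1+i).choose (M+1) + (M+1+i).choose (M+2) := by
      have : M+1+(i+1) = (M+1+i) + 1 := by omega
      rw [this]
      exact Nat.choose_succ_succ (M+1+i) (M+1)
    have e1 : M + (i+1) = M + 1 + i := by omega
    rw [e1, p1, p2]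
    push_cast
    ring

lemma cnt_formula : ∀ M : ℕ, ∀ i : ℕ, i ≤ M →
    (cnt (M+1) i : ℤ) = ((M+i).choose M : ℤ) - ((M+i).choose (M+1) : ℤ) := by
  intro M
  induction M with
  | zero =>
    intro i hi
    interval_cases i
    simp [cnt_one]
  | succ M ih =>
    intro i hi
    rw [cnt_rec M i (by omega)]
    have key : ∀ h ∈ Finset.range (i+1),
        (cnt (M+1) h : ℤ) = ((M+h).choose M : ℤ) - ((M+h).choose (M+1) : ℤ) := by
      intro h hh
      rw [Finset.mem_range] at hh
      rcases Nat.lt_or_ge h (M+1) with h1 | h1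
      · exact ih h (by omega)
      · have h2 : h = M + 1 := by omega
        subst h2
        rw [cnt_zero_of_ge _ _ (le_refl _)]
        have : (M + (M+1)).choose M = (M + (M+1)).choose (M+1) := by
          have := Nat.choose_symm (n := M + (M+1)) (k := M) (by omega)
          have e : M + (M+1) - M = M + 1 := by omega
          rw [e] at this
          exact this.symm
        rw [this]
        simp
    push_cast
    rw [Finset.sum_congr rfl key, hockey M i]

lemma cnt_final (n : ℕ) : cnt (n+1) n = (2*n).choose n - (2*n).choose (n+1) := by
  have h1 := cnt_formula n n (le_refl n)
  have e : n + n = 2 * n := by omega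
  rw [e] at h1
  have h2 : (2*n).choose (n+1) ≤ (2*n).choose n := by
    have := Nat.choose_le_middle (n+1) (2*n)
    have e2 : 2*n/2 = n := by omega
    rwa [e2] at this
  omega

end Arithmetic
/-- `a1 m i` is the number of 123-avoiding permutations of `{1,…,m}` with
first entry `i` (1-indexed values). -/
noncomputable def a1 (m i : ℕ) : ℕ :=
  Nat.card {π : Equiv.Perm (Fin m) //
    Avoids123 π ∧ ∀ j : Fin m, j.val = 0 → ((π j : Fin m) : ℕ) + 1 = i}

/-- The number of 123-avoiding permutations of `{1,…,n}` equals
`a1 (n+1) (n+1)`, which by the formula `a1 m i = C(m+i-2, m-1) - C(m+i-2, m)`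
equals `C(2n, n) - C(2n, n+1)`; consequently it equals `C(2n, n)/(n+1)`. -/
theorem count_avoiding_123_formula (n : ℕ) :
    Nat.card {π : Equiv.Perm (Fin n) // Avoids123 π} = a1 (n + 1) (n + 1) ∧
    a1 (n + 1) (n + 1) =
      ((n + 1) + (n + 1) - 2).choose ((n + 1) - 1) -
        ((n + 1) + (n + 1) - 2).choose (n + 1) ∧
    Nat.card {π : Equiv.Perm (Fin n) // Avoids123 π} = (2 * n).choose n / (n + 1) := by
  have hC : a1 (n+1) (n+1) = cnt (n+1) n := a1_bridge n
  have h1 : Nat.card {π : Equiv.Perm (Fin n) // Avoids123 π} = cnt (n+1) n :=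
    (avoiders_bridge n).trans (prepend_max_card n)
  have hD := cnt_final n
  have e1 : (n + 1) + (n + 1) - 2 = 2 * n := by omega
  have e2 : (n + 1) - 1 = n := by omega
  refine ⟨h1.trans hC.symm, by rw [e1, e2]; exact hC.trans hD, ?_⟩
  rw [h1, hD]
  -- arithmetic: C(2n,n) - C(2n,n+1) = C(2n,n) / (n+1)
  set A := (2*n).choose n with hA
  set B := (2*n).choose (n+1) with hB
  have key := Nat.choose_succ_right_eq (2*n) n
  have e3 : 2*n - n = n := by omega
  rw [e3] at key
  have hle : B ≤ A := by
    have := Nat.choose_le_middle (n+1) (2*n)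
    have e2' : 2*n/2 = n := by omega
    rw [e2'] at this
    exact this
  have keyz : (B : ℤ) * (n+1) = (A : ℤ) * n := by exact_mod_cast key
  have hz : ((A - B : ℕ) : ℤ) * (n+1) = (A : ℤ) := by
    rw [Nat.cast_sub hle]
    linear_combination -keyz
  have hmul : (A - B) * (n+1) = A := by exact_mod_cast hz
  exact (Nat.div_eq_of_eq_mul_left (by omega) hmul.symm).symm
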